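/- Let G be a compact Hausdorff group, X a compact Hausdorff space with a continuous G-action, and α the induced G-action on C(X). Then the G-index of X equals the local-triviality dimension of α: ind_G(X) = dim_LT(α). -/

import Mathlib

noncomputable section

/-- Evaluation at a point, as a star algebra homomorphism (allowing a noncommutative
codomain). -/
def evalSAH {X : Type} [TopologicalSpace X] (A : Type) [CStarAlgebra A] (x : X) :
    C(X, A) →⋆ₐ[ℂ] A where
  toFun f := f x
  map_one' := rfl
  map_mul' _ _ := rfl
  map_zero' := rfl
  map_add' _ _ := rfl
  commutes' _ := rfl
  map_star' _ := rfl

/-- The cone `C₀((0,1]) ⊗ A ≅ C₀((0,1], A) = {f ∈ C([0,1], A) : f (0) = 0}`, as a non-unital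
star subalgebra of `C([0,1], A)`. -/
def coneIdeal (A : Type) [CStarAlgebra A] :
    NonUnitalStarSubalgebra ℂ C(unitInterval, A) where
  carrier := {f | f 0 = 0}
  add_mem' := by
    intro a b ha hb
    simp only [Set.mem_setOf_eq] at *
    simp [ha, hb]
  zero_mem' := rfl
  mul_mem' := by
    intro a b ha hb
    simp only [Set.mem_setOf_eq] at *
    simp [ha, hb]
  smul_mem' := by
    intro c f hf
    simp only [Set.mem_setOf_eq] at *
    simp [hf]
  star_mem' := by
    intro a ha
    simp only [Set.mem_setOf_eq] at *
    simp [ha]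

lemma mem_coneIdeal {A : Type} [CStarAlgebra A] {f : C(unitInterval, A)} :
    f ∈ coneIdeal A ↔ f 0 = 0 := Iff.rfl

/-- The element `t ⊗ a` of the cone `C₀((0,1]) ⊗ A`, i.e. the function `s ↦ s • a`. -/
def coneElem (A : Type) [CStarAlgebra A] (a : A) : coneIdeal A :=
  ⟨⟨fun s => ((s : ℝ) : ℂ) • a, by fun_prop⟩, by
    simp only [mem_coneIdeal, ContinuousMap.coe_mk]
    norm_num⟩

noncomputable section

/-- Points of the simplicial model of the `(n+1)`-fold join `E_n G = G ∗ ⋯ ∗ G`: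
pairs `(t, g)` with `t` in the standard `n`-simplex. -/
def PreJoin (n : ℕ) (G : Type) [TopologicalSpace G] : Type :=
  {p : (Fin (n + 1) → ℝ) × (Fin (n + 1) → G) // (∀ i, 0 ≤ p.1 i) ∧ (∑ i, p.1 i) = 1}

instance (n : ℕ) (G : Type) [TopologicalSpace G] : TopologicalSpace (PreJoin n G) := by
  unfold PreJoin; infer_instance

/-- The identification: the group coordinate `gᵢ` is irrelevant whenever `tᵢ = 0`. -/
def joinIdent (n : ℕ) (G : Type) [TopologicalSpace G] :
    PreJoin n G → PreJoin n G → Prop := fun p q =>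
  p.val.1 = q.val.1 ∧ ∀ i, p.val.1 i ≠ 0 → p.val.2 i = q.val.2 i

/-- The `(n+1)`-fold topological join `E_n G = G ∗ ⋯ ∗ G` (simplicial model). -/
def EJoin (n : ℕ) (G : Type) [TopologicalSpace G] : Type := Quot (joinIdent n G)

instance (n : ℕ) (G : Type) [TopologicalSpace G] : TopologicalSpace (EJoin n G) :=
  inferInstanceAs (TopologicalSpace (Quot _))

/-- The diagonal `G`-action on `E_n G` by left translation in each join factor. -/
def joinSMul (n : ℕ) {G : Type} [TopologicalSpace G] [Group G] (g : G) :
    EJoin n G → EJoin n G :=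
  Quot.map (fun p => ⟨(p.val.1, fun i => g * p.val.2 i), p.property⟩)
    (fun p q h => ⟨h.1, fun i hi => by
      show g * p.val.2 i = g * q.val.2 i
      rw [h.2 i hi]⟩)

set_option synthInstance.maxHeartbeats 1000000
set_option maxHeartbeats 1000000

/-- Left translation of a cone element by `g ∈ G`:
`F ↦ ((s, k) ↦ F s (g⁻¹ k))`, the `ℤ`-classical action of `G` on
`C₀((0,1]) ⊗ C(G) = C₀((0,1], C(G))`. -/
def coneLT {G : Type} [TopologicalSpace G] [CompactSpace G] [Group G] [IsTopologicalGroup G]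
    (g : G) (F : coneIdeal C(G, ℂ)) : coneIdeal C(G, ℂ) :=
  ⟨ContinuousMap.comp
      ⟨fun φ : C(G, ℂ) => φ.comp ⟨fun k => g⁻¹ * k, by continuity⟩,
        ContinuousMap.continuous_precomp _⟩
      (F : C(unitInterval, C(G, ℂ))), by
    simp only [mem_coneIdeal, ContinuousMap.comp_apply, ContinuousMap.coe_mk]
    rw [show (F : C(unitInterval, C(G, ℂ))) 0 = 0 from F.property]
    exact ContinuousMap.zero_comp _⟩


set_option maxHeartbeats 4000000

section Fwd

variable {n : ℕ} {G : Type} [TopologicalSpace G] [Group G] [IsTopologicalGroup G]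
  [CompactSpace G] [T2Space G]

lemma PreJoin.le_one (p : PreJoin n G) (j : Fin (n + 1)) : p.val.1 j ≤ 1 := by
  have := p.property
  calc p.val.1 j ≤ ∑ i, p.val.1 i :=
        Finset.single_le_sum (fun i _ => this.1 i) (Finset.mem_univ j)
    _ = 1 := this.2

/-- The `j`-th simplex coordinate as an element of `[0,1]`. -/
def tcoord (p : PreJoin n G) (j : Fin (n + 1)) : unitInterval :=
  ⟨p.val.1 j, p.property.1 j, p.le_one j⟩

lemma continuous_tcoord (j : Fin (n + 1)) : Continuous fun p : PreJoin n G => tcoord p j :=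
  Continuous.subtype_mk ((continuous_apply j).comp (continuous_fst.comp continuous_subtype_val)) _

lemma continuous_gcoord (j : Fin (n + 1)) : Continuous fun p : PreJoin n G => p.val.2 j :=
  (continuous_apply j).comp (continuous_snd.comp continuous_subtype_val)

/-- Evaluation of a cone element along the `j`-th join coordinate, descended to `EJoin`. -/
def evalJoin (j : Fin (n + 1)) (h : coneIdeal C(G, ℂ)) : EJoin n G → ℂ :=
  Quot.lift (fun p => (h.val (tcoord p j)) (p.val.2 j)) (by
    intro p q hpq
    show (h.val (tcoord p j)) (p.val.2 j) = (h.val (tcoord q j)) (q.val.2 j)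
    by_cases hz : p.val.1 j = 0
    · have hq : q.val.1 j = 0 := hpq.1 ▸ hz
      have h1 : tcoord p j = 0 := Subtype.ext hz
      have h2 : tcoord q j = 0 := Subtype.ext hq
      rw [h1, h2, h.property]
      rfl
    · have h1 : tcoord p j = tcoord q j := Subtype.ext (congrFun hpq.1 j)
      rw [h1, hpq.2 j hz])

lemma continuous_evalJoin (j : Fin (n + 1)) (h : coneIdeal C(G, ℂ)) :
    Continuous (evalJoin j h) := by
  rw [evalJoin]; apply isQuotientMap_quot_mk.continuous_iff.mpr
  show Continuous fun p : PreJoin n G => (h.val (tcoord p j)) (p.val.2 j)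
  have h1 : Continuous fun p : PreJoin n G => h.val (tcoord p j) :=
    h.val.continuous.comp (continuous_tcoord j)
  exact continuous_eval.comp (h1.prodMk (continuous_gcoord j))

lemma evalJoin_mk (j : Fin (n + 1)) (h : coneIdeal C(G, ℂ)) (p : PreJoin n G) :
    evalJoin j h (Quot.mk _ p) = (h.val (tcoord p j)) (p.val.2 j) := rfl

variable {X : Type} [TopologicalSpace X] [CompactSpace X] [T2Space X]
  [MulAction G X] [ContinuousSMul G X]

lemma evalJoin_add (j : Fin (n + 1)) (h₁ h₂ : coneIdeal C(G, ℂ)) (e : EJoin n G) :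
    evalJoin j (h₁ + h₂) e = evalJoin j h₁ e + evalJoin j h₂ e := by
  induction e using Quot.ind with
  | _ p => simp [evalJoin_mk]

lemma evalJoin_zero (j : Fin (n + 1)) (e : EJoin n G) :
    evalJoin j (0 : coneIdeal C(G, ℂ)) e = 0 := by
  induction e using Quot.ind with
  | _ p => simp [evalJoin_mk]

lemma evalJoin_mul (j : Fin (n + 1)) (h₁ h₂ : coneIdeal C(G, ℂ)) (e : EJoin n G) :
    evalJoin j (h₁ * h₂) e = evalJoin j h₁ e * evalJoin j h₂ e := by
  induction e using Quot.ind with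
  | _ p => simp [evalJoin_mk]

lemma evalJoin_smul (j : Fin (n + 1)) (c : ℂ) (h : coneIdeal C(G, ℂ)) (e : EJoin n G) :
    evalJoin j (c • h) e = c * evalJoin j h e := by
  induction e using Quot.ind with
  | _ p => simp [evalJoin_mk]

lemma evalJoin_star (j : Fin (n + 1)) (h : coneIdeal C(G, ℂ)) (e : EJoin n G) :
    evalJoin j (star h) e = star (evalJoin j h e) := by
  induction e using Quot.ind with
  | _ p => simp [evalJoin_mk]

variable {X : Type} [TopologicalSpace X] [CompactSpace X] [T2Space X]
  [MulAction G X] [ContinuousSMul G X]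

/-- The homomorphisms associated to an equivariant map `X → E_n G`. -/
def rhoOf (F : C(X, EJoin n G)) (j : Fin (n + 1)) :
    ↥(coneIdeal C(G, ℂ)) →⋆ₙₐ[ℂ] C(X, ℂ) where
  toFun h := ⟨fun x => evalJoin j h (F x), (continuous_evalJoin j h).comp F.continuous⟩
  map_add' h₁ h₂ := ContinuousMap.ext fun x => evalJoin_add j h₁ h₂ (F x)
  map_zero' := ContinuousMap.ext fun x => evalJoin_zero j (F x)
  map_mul' h₁ h₂ := ContinuousMap.ext fun x => evalJoin_mul j h₁ h₂ (F x)
  map_smul' c h := ContinuousMap.ext fun x => evalJoin_smul j c h (F x)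
  map_star' h := ContinuousMap.ext fun x => evalJoin_star j h (F x)

lemma forward_dir {n : ℕ} (F : C(X, EJoin n G))
    (hF : ∀ (g : G) (x : X), F (g • x) = joinSMul n g (F x)) :
    ∃ ρ : Fin (n + 1) → (↥(coneIdeal C(G, ℂ)) →⋆ₙₐ[ℂ] C(X, ℂ)),
      (∀ (j : Fin (n + 1)) (g : G) (F : coneIdeal C(G, ℂ)),
        (ρ j) (coneLT g F) =
          ContinuousMap.compStarAlgHom' ℂ ℂ
            ⟨fun x : X => g⁻¹ • x, continuous_const_smul _⟩ ((ρ j) F)) ∧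
      (∑ j, (ρ j) (coneElem C(G, ℂ) 1)) = 1 := by
  refine ⟨rhoOf F, fun j g h => ?_, ?_⟩
  · ext x
    show evalJoin j (coneLT g h) (F x) = evalJoin j h (F (g⁻¹ • x))
    have h2 : F (g⁻¹ • x) = joinSMul n g⁻¹ (F x) := hF g⁻¹ x
    rw [h2]
    obtain ⟨p, hp⟩ := Quot.exists_rep (F x)
    rw [← hp]
    rfl
  · ext x
    obtain ⟨p, hp⟩ := Quot.exists_rep (F x)
    have : (∑ j, (rhoOf F j) (coneElem C(G, ℂ) 1)) x
        = ∑ j, ((rhoOf F j) (coneElem C(G, ℂ) 1)) x := by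
      simp
    rw [this]
    have h1 : ∀ j, ((rhoOf F j) (coneElem C(G, ℂ) 1)) x = ((p.val.1 j : ℝ) : ℂ) := by
      intro j
      show evalJoin j (coneElem C(G, ℂ) 1) (F x) = _
      rw [← hp]
      show ((tcoord p j : ℝ) : ℂ) • (1 : C(G, ℂ)) (p.val.2 j) = _
      simp [tcoord]
    rw [Finset.sum_congr rfl fun j _ => h1 j]
    have h2 : (((∑ i, p.val.1 i : ℝ) : ℂ)) = ((1 : ℝ) : ℂ) := by
      exact_mod_cast congrArg Complex.ofReal p.property.2
    push_cast at h2
    rw [h2]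
    simp

end Fwd
open Topology Filter

section Bwd

variable {G : Type} [TopologicalSpace G] [Group G] [IsTopologicalGroup G]
  [CompactSpace G] [T2Space G]

local instance : CStarAlgebra C(G, ℂ) := inferInstance
local instance : NonUnitalNonAssocRing ↥(coneIdeal C(G, ℂ)) := inferInstance
local instance : NonUnitalRing ↥(coneIdeal C(G, ℂ)) := inferInstance
local instance : NonUnitalSemiring ↥(coneIdeal C(G, ℂ)) := inferInstance
local instance : AddCommMonoid ↥(coneIdeal C(G, ℂ)) := inferInstance
local instance : Star ↥(coneIdeal C(G, ℂ)) := inferInstance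
local instance : SMul ℂ ↥(coneIdeal C(G, ℂ)) := inferInstance
local instance : Module ℂ ↥(coneIdeal C(G, ℂ)) := inferInstance
local instance : NormedRing C(G, ℂ) := inferInstance
local instance : NormedAlgebra ℂ C(G, ℂ)  := inferInstance
local instance : CompleteSpace C(G, ℂ) := inferInstance
local instance : StarRing C(G, ℂ) := inferInstance

/-- The square root of `t ⊗ 1` in the cone. -/
def sqrtCone (G : Type) [TopologicalSpace G] [CompactSpace G] [T2Space G] [Group G]
    [IsTopologicalGroup G] : coneIdeal C(G, ℂ) :=
  ⟨⟨fun s => ((Real.sqrt s : ℝ) : ℂ) • 1, by fun_prop⟩, by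
    simp only [mem_coneIdeal, ContinuousMap.coe_mk]
    norm_num⟩

lemma sqrtCone_star : star (sqrtCone G) = sqrtCone G := by
  apply Subtype.ext
  ext s k
  simp [sqrtCone, Complex.conj_ofReal]

lemma sqrtCone_mul_self : sqrtCone G * sqrtCone G = coneElem C(G, ℂ) 1 := by
  apply Subtype.ext
  ext s k
  simp [sqrtCone, coneElem, ← Complex.ofReal_mul, Real.mul_self_sqrt s.2.1]

lemma coneElem_mul_coneElem (a b : C(G, ℂ)) :
    coneElem C(G, ℂ) a * coneElem C(G, ℂ) b =
      coneElem C(G, ℂ) (a * b) * coneElem C(G, ℂ) 1 := by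
  apply Subtype.ext
  ext s k
  simp [coneElem]

lemma coneElem_add (a b : C(G, ℂ)) :
    coneElem C(G, ℂ) (a + b) = coneElem C(G, ℂ) a + coneElem C(G, ℂ) b := by
  apply Subtype.ext
  ext s k
  simp [coneElem]

lemma coneElem_zero : coneElem C(G, ℂ) 0 = 0 := by
  apply Subtype.ext
  ext s k
  simp [coneElem]

lemma coneElem_smul (c : ℂ) (a : C(G, ℂ)) :
    coneElem C(G, ℂ) (c • a) = c • coneElem C(G, ℂ) a := by
  apply Subtype.ext
  ext s k
  simp [coneElem]
  ring

variable {X : Type} [TopologicalSpace X] [CompactSpace X] [T2Space X]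
  [MulAction G X] [ContinuousSMul G X]

local instance : CStarAlgebra C(X, ℂ) := inferInstance
local instance : FunLike (↥(coneIdeal C(G, ℂ)) →⋆ₙₐ[ℂ] C(X, ℂ)) ↥(coneIdeal C(G, ℂ)) C(X, ℂ) :=
  inferInstance
local instance : NonUnitalAlgHomClass (↥(coneIdeal C(G, ℂ)) →⋆ₙₐ[ℂ] C(X, ℂ)) ℂ
    ↥(coneIdeal C(G, ℂ)) C(X, ℂ) := inferInstance
local instance : StarHomClass (↥(coneIdeal C(G, ℂ)) →⋆ₙₐ[ℂ] C(X, ℂ))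
    ↥(coneIdeal C(G, ℂ)) C(X, ℂ) := inferInstance

variable (ρj : ↥(coneIdeal C(G, ℂ)) →⋆ₙₐ[ℂ] C(X, ℂ))

/-- The function `t_j`. -/
def Tfun : X → ℝ := fun x => ((ρj (sqrtCone G)) x).re ^ 2

lemma Tfun_continuous : Continuous (Tfun ρj) := by
  unfold Tfun
  have := (map_continuous (ρj (sqrtCone G)))
  fun_prop

lemma Tfun_nonneg (x : X) : 0 ≤ Tfun ρj x := sq_nonneg _

lemma rho_coneElem_one (x : X) :
    (ρj (coneElem C(G, ℂ) 1)) x = ((Tfun ρj x : ℝ) : ℂ) := by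
  have h1 : coneElem C(G, ℂ) 1 = sqrtCone G * sqrtCone G := sqrtCone_mul_self.symm
  have hsa : star (ρj (sqrtCone G)) = ρj (sqrtCone G) := by
    rw [← map_star, sqrtCone_star]
  have hx : (starRingEnd ℂ) ((ρj (sqrtCone G)) x) = (ρj (sqrtCone G)) x := by
    conv_rhs => rw [← hsa]
    rfl
  have hz : (((ρj (sqrtCone G)) x).re : ℂ) = (ρj (sqrtCone G)) x :=
    Complex.conj_eq_iff_re.mp hx
  rw [h1, map_mul]
  show (ρj (sqrtCone G)) x * (ρj (sqrtCone G)) x = _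
  rw [← hz]
  push_cast [Tfun]
  ring

lemma Tfun_ne_zero_complex {x : X} (hx : Tfun ρj x ≠ 0) :
    ((Tfun ρj x : ℝ) : ℂ) ≠ 0 := by
  exact_mod_cast hx

/-- The character of `C(G)` obtained from `ρⱼ` at a point `x` where `tⱼ(x) ≠ 0`. -/
def phiAH (x : X) (hx : Tfun ρj x ≠ 0) : C(G, ℂ) →ₐ[ℂ] ℂ where
  toFun a := (ρj (coneElem C(G, ℂ) a)) x / ((Tfun ρj x : ℝ) : ℂ)
  map_one' := by
    show (ρj (coneElem C(G, ℂ) 1)) x / ((Tfun ρj x : ℝ) : ℂ) = 1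
    rw [rho_coneElem_one]
    exact div_self (Tfun_ne_zero_complex ρj hx)
  map_mul' a b := by
    have key : (ρj (coneElem C(G, ℂ) a)) x * (ρj (coneElem C(G, ℂ) b)) x
        = (ρj (coneElem C(G, ℂ) (a * b))) x * ((Tfun ρj x : ℝ) : ℂ) := by
      rw [← rho_coneElem_one ρj x]
      show _ = (ρj (coneElem C(G, ℂ) (a * b)) * ρj (coneElem C(G, ℂ) 1)) x
      rw [← map_mul, ← coneElem_mul_coneElem, map_mul]
      rfl
    show (ρj (coneElem C(G, ℂ) (a * b))) x / ((Tfun ρj x : ℝ) : ℂ) =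
      (ρj (coneElem C(G, ℂ) a)) x / ((Tfun ρj x : ℝ) : ℂ) *
        ((ρj (coneElem C(G, ℂ) b)) x / ((Tfun ρj x : ℝ) : ℂ))
    rw [div_mul_div_comm, key]
    have hT := Tfun_ne_zero_complex ρj hx
    field_simp
  map_zero' := by
    show (ρj (coneElem C(G, ℂ) 0)) x / ((Tfun ρj x : ℝ) : ℂ) = 0
    rw [coneElem_zero, map_zero]
    simp
  map_add' a b := by
    show (ρj (coneElem C(G, ℂ) (a + b))) x / _ = _
    rw [coneElem_add, map_add, ContinuousMap.add_apply, add_div]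
  commutes' c := by
    have h1 : (algebraMap ℂ C(G, ℂ)) c = c • (1 : C(G, ℂ)) := by
      ext k
      simp [Algebra.algebraMap_eq_smul_one]
    show (ρj (coneElem C(G, ℂ) ((algebraMap ℂ C(G, ℂ)) c))) x / _ = _
    rw [h1, coneElem_smul, map_smul, ContinuousMap.smul_apply, rho_coneElem_one]
    rw [smul_eq_mul, mul_div_assoc, div_self (Tfun_ne_zero_complex ρj hx), mul_one]
    rfl

/-- The associated element of the character space. -/
def charOf (x : X) (hx : Tfun ρj x ≠ 0) : WeakDual.characterSpace ℂ C(G, ℂ) :=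
  WeakDual.CharacterSpace.equivAlgHom.symm (phiAH ρj x hx)

lemma charOf_apply (x : X) (hx : Tfun ρj x ≠ 0) (a : C(G, ℂ)) :
    charOf ρj x hx a = (ρj (coneElem C(G, ℂ) a)) x / ((Tfun ρj x : ℝ) : ℂ) := by
  rw [charOf]
  rw [WeakDual.CharacterSpace.equivAlgHom_symm_coe]
  rfl

/-- The group coordinate `γⱼ(x) ∈ G`, for `x` with `tⱼ(x) ≠ 0`. -/
def gammaOf (x : X) (hx : Tfun ρj x ≠ 0) : G :=
  (WeakDual.CharacterSpace.homeoEval G ℂ).symm (charOf ρj x hx)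

lemma eval_gammaOf (x : X) (hx : Tfun ρj x ≠ 0) (a : C(G, ℂ)) :
    a (gammaOf ρj x hx) = (ρj (coneElem C(G, ℂ) a)) x / ((Tfun ρj x : ℝ) : ℂ) := by
  have h1 : WeakDual.CharacterSpace.homeoEval G ℂ (gammaOf ρj x hx) = charOf ρj x hx :=
    (WeakDual.CharacterSpace.homeoEval G ℂ).apply_symm_apply _
  have h2 : (WeakDual.CharacterSpace.homeoEval G ℂ (gammaOf ρj x hx)) a
      = a (gammaOf ρj x hx) :=
    WeakDual.CharacterSpace.continuousMapEval_apply_apply G ℂ (gammaOf ρj x hx) a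
  rw [← h2, h1, charOf_apply]

/-- Total group-coordinate function (defaults to `1` where `tⱼ = 0`). -/
def gammaTot : X → G := fun x => if hx : Tfun ρj x ≠ 0 then gammaOf ρj x hx else 1

lemma continuousAt_gammaTot (x₀ : X) (hx₀ : Tfun ρj x₀ ≠ 0) :
    ContinuousAt (gammaTot ρj) x₀ := by
  set U : Set X := {x | Tfun ρj x ≠ 0} with hU
  have hUopen : IsOpen U := (isOpen_compl_singleton).preimage (Tfun_continuous ρj)
  have hval : Continuous fun u : U =>
      (charOf ρj u.val u.property : WeakDual ℂ C(G, ℂ)) := by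
    apply WeakDual.continuous_of_continuous_eval
    intro a
    have heq : ∀ u : U, ((charOf ρj u.val u.property : WeakDual ℂ C(G, ℂ)) a)
        = (ρj (coneElem C(G, ℂ) a)) u.val / ((Tfun ρj u.val : ℝ) : ℂ) := fun u =>
      charOf_apply ρj u.val u.property a
    have hcont : Continuous fun u : U =>
        (ρj (coneElem C(G, ℂ) a)) u.val / ((Tfun ρj u.val : ℝ) : ℂ) := by
      apply Continuous.div₀
      · exact (map_continuous (ρj (coneElem C(G, ℂ) a))).comp continuous_subtype_val
      · exact Complex.continuous_ofReal.comp ((Tfun_continuous ρj).comp continuous_subtype_val)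
      · exact fun u => Tfun_ne_zero_complex ρj u.property
    exact hcont.congr fun u => (heq u).symm
  have hchar : Continuous fun u : U => charOf ρj u.val u.property :=
    hval.subtype_mk _
  have hrest : Continuous fun u : U => gammaTot ρj u.val := by
    have h1 : Continuous fun u : U =>
        (WeakDual.CharacterSpace.homeoEval G ℂ).symm (charOf ρj u.val u.property) :=
      (WeakDual.CharacterSpace.homeoEval G ℂ).symm.continuous.comp hchar
    apply h1.congr
    intro u
    show _ = gammaTot ρj u.val
    simp only [gammaTot]
    rw [dif_pos (show Tfun ρj u.val ≠ 0 from u.property)]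
    rfl
  have hCO : ContinuousOn (gammaTot ρj) U :=
    continuousOn_iff_continuous_restrict.mpr hrest
  exact hCO.continuousAt (hUopen.mem_nhds hx₀)

lemma coneLT_coneElem (g : G) (a : C(G, ℂ)) :
    coneLT g (coneElem C(G, ℂ) a)
      = coneElem C(G, ℂ) (a.comp ⟨fun k => g⁻¹ * k, by continuity⟩) := by
  apply Subtype.ext
  ext s k
  simp [coneLT, coneElem]

lemma coneLT_sqrtCone (g : G) : coneLT g (sqrtCone G) = sqrtCone G := by
  apply Subtype.ext
  ext s k
  simp [coneLT, sqrtCone]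

/-- Shorthand for the equivariance hypothesis on a single `ρⱼ`. -/
def EquivHyp (ρj : ↥(coneIdeal C(G, ℂ)) →⋆ₙₐ[ℂ] C(X, ℂ)) : Prop :=
  ∀ (g : G) (F : coneIdeal C(G, ℂ)),
    ρj (coneLT g F) =
      ContinuousMap.compStarAlgHom' ℂ ℂ
        ⟨fun x : X => g⁻¹ • x, continuous_const_smul _⟩ (ρj F)

lemma rho_apply_smul (hj : EquivHyp ρj) (h : coneIdeal C(G, ℂ)) (g : G) (x : X) :
    (ρj (coneLT g h)) (g • x) = (ρj h) x := by
  have h1 := ContinuousMap.congr_fun (hj g h) (g • x)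
  rw [h1]
  show (ρj h) (g⁻¹ • g • x) = _
  rw [inv_smul_smul]

lemma Tfun_smul (hj : EquivHyp ρj) (g : G) (x : X) : Tfun ρj (g • x) = Tfun ρj x := by
  unfold Tfun
  have h1 : (ρj (sqrtCone G)) (g • x) = (ρj (sqrtCone G)) x := by
    conv_lhs => rw [← coneLT_sqrtCone g]
    exact rho_apply_smul ρj hj (sqrtCone G) g x
  rw [h1]

lemma gammaTot_smul (hj : EquivHyp ρj) (g : G) (x : X) (hx : Tfun ρj x ≠ 0) :
    gammaTot ρj (g • x) = g * gammaTot ρj x := by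
  have hgx : Tfun ρj (g • x) ≠ 0 := by rw [Tfun_smul ρj hj]; exact hx
  simp only [gammaTot]
  rw [dif_pos hgx, dif_pos hx]
  apply (WeakDual.CharacterSpace.homeoEval G ℂ).injective
  rw [show (WeakDual.CharacterSpace.homeoEval G ℂ) (gammaOf ρj (g • x) hgx)
      = charOf ρj (g • x) hgx from
    (WeakDual.CharacterSpace.homeoEval G ℂ).apply_symm_apply _]
  apply DFunLike.ext
  intro a
  set b : C(G, ℂ) := a.comp ⟨fun k => g * k, by continuity⟩ with hb
  have hab : coneLT g (coneElem C(G, ℂ) b) = coneElem C(G, ℂ) a := by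
    rw [coneLT_coneElem]
    congr 1
    ext k
    simp [hb]
  have hL : charOf ρj (g • x) hgx a
      = (ρj (coneElem C(G, ℂ) b)) x / ((Tfun ρj x : ℝ) : ℂ) := by
    rw [charOf_apply, ← hab, rho_apply_smul ρj hj _ g x, Tfun_smul ρj hj]
  have hR : (WeakDual.CharacterSpace.homeoEval G ℂ) (g * gammaOf ρj x hx) a
      = a (g * gammaOf ρj x hx) :=
    WeakDual.CharacterSpace.continuousMapEval_apply_apply G ℂ _ a
  have hbγ : b (gammaOf ρj x hx) = a (g * gammaOf ρj x hx) := rfl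
  rw [hL, hR, ← hbγ, eval_gammaOf ρj x hx b]

lemma Tfun_sum {n : ℕ} (ρ : Fin (n + 1) → (↥(coneIdeal C(G, ℂ)) →⋆ₙₐ[ℂ] C(X, ℂ)))
    (hsum : (∑ j, (ρ j) (coneElem C(G, ℂ) 1)) = 1) (x : X) :
    ∑ j, Tfun (ρ j) x = 1 := by
  have h1 := ContinuousMap.congr_fun hsum x
  have h2 : (∑ j, (ρ j) (coneElem C(G, ℂ) 1)) x
      = ∑ j, ((ρ j) (coneElem C(G, ℂ) 1)) x := by simp
  rw [h2] at h1
  have h3 : ∑ j, ((ρ j) (coneElem C(G, ℂ) 1)) x = ((∑ j, Tfun (ρ j) x : ℝ) : ℂ) := by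
    push_cast
    exact Finset.sum_congr rfl fun j _ => rho_coneElem_one (ρ j) x
  rw [h3, ContinuousMap.one_apply] at h1
  exact_mod_cast h1

lemma backward_dir {n : ℕ} (ρ : Fin (n + 1) → (↥(coneIdeal C(G, ℂ)) →⋆ₙₐ[ℂ] C(X, ℂ)))
    (hequiv : ∀ (j : Fin (n + 1)) (g : G) (F : coneIdeal C(G, ℂ)),
      (ρ j) (coneLT g F) =
        ContinuousMap.compStarAlgHom' ℂ ℂ
          ⟨fun x : X => g⁻¹ • x, continuous_const_smul _⟩ ((ρ j) F))
    (hsum : (∑ j, (ρ j) (coneElem C(G, ℂ) 1)) = 1) :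
    ∃ F : C(X, EJoin n G), ∀ (g : G) (x : X), F (g • x) = joinSMul n g (F x) := by
  have hj : ∀ j, EquivHyp (ρ j) := fun j => hequiv j
  set q : X → PreJoin n G := fun x =>
    ⟨(fun j => Tfun (ρ j) x, fun j => gammaTot (ρ j) x),
      ⟨fun j => Tfun_nonneg _ x, Tfun_sum ρ hsum x⟩⟩ with hqdef
  have hcont : Continuous fun x => (Quot.mk (joinIdent n G) (q x) : EJoin n G) := by
    rw [continuous_iff_continuousAt]
    intro x₀
    rw [ContinuousAt, Filter.tendsto_def]
    intro V hV
    obtain ⟨V', hV'sub, hV'open, hV'mem⟩ := mem_nhds_iff.mp hV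
    have hWopen : IsOpen (Quot.mk (joinIdent n G) ⁻¹' V' : Set (PreJoin n G)) :=
      hV'open.preimage continuous_quot_mk
    obtain ⟨W', hW'open, hWeq⟩ := isOpen_induced_iff.mp hWopen
    set T0 : Fin (n + 1) → ℝ := fun j => Tfun (ρ j) x₀ with hT0
    set K : Set (Fin (n + 1) → G) :=
      Set.pi Set.univ
        (fun j => if Tfun (ρ j) x₀ = 0 then Set.univ else {gammaTot (ρ j) x₀}) with hK
    have hKcompact : IsCompact K := isCompact_univ_pi fun j => by
      by_cases h : Tfun (ρ j) x₀ = 0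
      · rw [if_pos h]; exact isCompact_univ
      · rw [if_neg h]; exact isCompact_singleton
    have hKmem : ∀ c ∈ K, ((T0, c) : (Fin (n + 1) → ℝ) × (Fin (n + 1) → G)) ∈ W' := by
      intro c hc
      have hprop : (∀ i, 0 ≤ T0 i) ∧ (∑ i, T0 i) = 1 :=
        ⟨fun i => Tfun_nonneg _ _, Tfun_sum ρ hsum x₀⟩
      set pc : PreJoin n G := ⟨(T0, c), hprop⟩ with hpc
      have hrel : joinIdent n G (q x₀) pc := by
        refine ⟨rfl, fun i hi => ?_⟩
        have hi' : Tfun (ρ i) x₀ ≠ 0 := hi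
        have hci := hc i (Set.mem_univ i)
        simp only [if_neg hi', Set.mem_singleton_iff] at hci
        show gammaTot (ρ i) x₀ = c i
        exact hci.symm
      have hquot : Quot.mk (joinIdent n G) pc = Quot.mk (joinIdent n G) (q x₀) :=
        (Quot.sound hrel).symm
      have hmemW : pc ∈ Quot.mk (joinIdent n G) ⁻¹' V' := by
        show Quot.mk (joinIdent n G) pc ∈ V'
        rw [hquot]
        exact hV'mem
      rw [← hWeq] at hmemW
      exact hmemW
    have hnhds : ∀ c ∈ K, ∃ A, A ∈ 𝓝 T0 ∧ ∃ t : Fin (n + 1) → Set G,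
        (∀ i, t i ∈ 𝓝 (c i)) ∧ A ×ˢ Set.pi Set.univ t ⊆ W' := by
      intro c hc
      have hW'nhds : W' ∈ 𝓝 ((T0, c)) := hW'open.mem_nhds (hKmem c hc)
      rw [nhds_prod_eq, Filter.mem_prod_iff] at hW'nhds
      obtain ⟨A, hA, B, hB, hAB⟩ := hW'nhds
      rw [nhds_pi, Filter.mem_pi] at hB
      obtain ⟨I, _, t, ht, hsub⟩ := hB
      refine ⟨A, hA, t, ht, ?_⟩
      refine subset_trans (Set.prod_mono subset_rfl ?_) hAB
      intro f hf
      exact hsub fun i _ => hf i (Set.mem_univ i)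
    choose Afun hAfun tfun htfun hsubfun using hnhds
    obtain ⟨cs, hcs⟩ := hKcompact.elim_nhds_subcover'
      (fun c hc => Set.pi Set.univ (tfun c hc))
      (fun c hc => set_pi_mem_nhds Set.finite_univ (fun i _ => htfun c hc i))
    have hAmem : (⋂ c ∈ cs, Afun c.val c.property) ∈ 𝓝 T0 :=
      (Filter.biInter_finset_mem cs).mpr fun c _ => hAfun c.val c.property
    have hTc : Continuous fun x => (fun j => Tfun (ρ j) x) :=
      continuous_pi fun j => Tfun_continuous (ρ j)
    have hev1 : ∀ᶠ x in 𝓝 x₀,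
        (fun j => Tfun (ρ j) x) ∈ ⋂ c ∈ cs, Afun c.val c.property := by
      have := hTc.continuousAt (x := x₀)
      exact this hAmem
    have hev2 : ∀ᶠ x in 𝓝 x₀, ∀ j, Tfun (ρ j) x₀ ≠ 0 →
        gammaTot (ρ j) x ∈ ⋂ c ∈ cs, tfun c.val c.property j := by
      rw [Filter.eventually_all]
      intro j
      by_cases hj0 : Tfun (ρ j) x₀ = 0
      · filter_upwards with x
        intro h
        exact absurd hj0 h
      · have hBmem : (⋂ c ∈ cs, tfun c.val c.property j) ∈ 𝓝 (gammaTot (ρ j) x₀) := by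
          refine (Filter.biInter_finset_mem cs).mpr fun c _ => ?_
          have h1 := htfun c.val c.property j
          have h2 := c.property j (Set.mem_univ j)
          simp only [if_neg hj0, Set.mem_singleton_iff] at h2
          rw [h2] at h1
          exact h1
        have h3 := (continuousAt_gammaTot (ρ j) x₀ hj0) hBmem
        filter_upwards [h3] with x hx
        intro _
        exact hx
    filter_upwards [hev1, hev2] with x hx1 hx2
    set c' : Fin (n + 1) → G := fun j =>
      if Tfun (ρ j) x₀ = 0 then gammaTot (ρ j) x else gammaTot (ρ j) x₀ with hc'
    have hc'K : c' ∈ K := by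
      intro j _
      by_cases h : Tfun (ρ j) x₀ = 0
      · simp only [hc', if_pos h]
        trivial
      · simp only [hc', if_neg h]
        exact Set.mem_singleton _
    obtain ⟨c, hcmem, hcc⟩ := Set.mem_iUnion₂.mp (hcs hc'K)
    have hxW' : ((fun j => Tfun (ρ j) x, fun j => gammaTot (ρ j) x) :
        (Fin (n + 1) → ℝ) × (Fin (n + 1) → G)) ∈ W' := by
      apply hsubfun c.val c.property
      refine Set.mem_prod.mpr ⟨?_, ?_⟩
      · exact Set.mem_iInter₂.mp hx1 c hcmem
      · intro i _
        show gammaTot (ρ i) x ∈ tfun c.val c.property i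
        by_cases hi0 : Tfun (ρ i) x₀ = 0
        · have : c' i = gammaTot (ρ i) x := by simp only [hc', if_pos hi0]
          rw [← this]
          exact hcc i (Set.mem_univ i)
        · exact Set.mem_iInter₂.mp (hx2 i hi0) c hcmem
    have hqx : q x ∈ Quot.mk (joinIdent n G) ⁻¹' V' := by
      rw [← hWeq]
      exact hxW'
    exact hV'sub hqx
  refine ⟨⟨fun x => Quot.mk (joinIdent n G) (q x), hcont⟩, ?_⟩
  intro g x
  show Quot.mk (joinIdent n G) (q (g • x)) = joinSMul n g (Quot.mk (joinIdent n G) (q x))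
  have hrhs : joinSMul n g (Quot.mk (joinIdent n G) (q x))
      = Quot.mk (joinIdent n G)
          ⟨((q x).val.1, fun i => g * (q x).val.2 i), (q x).property⟩ := rfl
  rw [hrhs]
  apply Quot.sound
  constructor
  · funext j
    exact Tfun_smul (ρ j) (hj j) g x
  · intro i hi
    have hi' : Tfun (ρ i) (g • x) ≠ 0 := hi
    have hx0 : Tfun (ρ i) x ≠ 0 := by
      rw [← Tfun_smul (ρ i) (hj i) g x]
      exact hi'
    exact gammaTot_smul (ρ i) (hj i) g x hx0

end Bwd
/-- Let `G` be a compact Hausdorff group, `X` a compact Hausdorff space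
with a continuous `G`-action, and `α` the induced `G`-action on `C(X)`.  Then the `G`-index
of `X` equals the local-triviality dimension of `α`:  `ind_G(X) = dim_LT(α)` (as values in
`ℕ∞`).

Here the `G`-index is the least `n` admitting a continuous `G`-equivariant map
`X → E_n G`, and `dim_LT(α)` is the least `n` admitting `G`-equivariant *-homomorphisms
`ρ₀, …, ρₙ : C₀((0,1]) ⊗ C(G) → C(X)` with `∑ⱼ ρⱼ(t ⊗ 1) = 1`; equivariance is expressed
by intertwining the translation action on the cone with the action `f ↦ f(g⁻¹ • ·)` on
`C(X)`. -/
theorem G_index_eq_dimLT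
    (G : Type) [TopologicalSpace G] [Group G] [IsTopologicalGroup G] [CompactSpace G]
    [T2Space G]
    (X : Type) [TopologicalSpace X] [CompactSpace X] [T2Space X]
    [MulAction G X] [ContinuousSMul G X] :
    sInf {d : ℕ∞ | ∃ n : ℕ, d = n ∧
        ∃ F : C(X, EJoin n G), ∀ (g : G) (x : X), F (g • x) = joinSMul n g (F x)} =
      sInf {d : ℕ∞ | ∃ n : ℕ, d = n ∧
        ∃ ρ : Fin (n + 1) → (↥(coneIdeal C(G, ℂ)) →⋆ₙₐ[ℂ] C(X, ℂ)),
          (∀ (j : Fin (n + 1)) (g : G) (F : coneIdeal C(G, ℂ)),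
            (ρ j) (coneLT g F) =
              ContinuousMap.compStarAlgHom' ℂ ℂ
                ⟨fun x : X => g⁻¹ • x, continuous_const_smul _⟩ ((ρ j) F)) ∧
          (∑ j, (ρ j) (coneElem C(G, ℂ) 1)) = 1} := by
  apply congrArg sInf
  ext d
  simp only [Set.mem_setOf_eq]
  constructor
  · rintro ⟨n, rfl, F, hF⟩
    exact ⟨n, rfl, forward_dir F hF⟩
  · rintro ⟨n, rfl, ρ, hequiv, hsum⟩
    exact ⟨n, rfl, backward_dir ρ hequiv hsum⟩
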